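/- For w in the open unit disk with w ≠ 0, the A^1-norm of the Bergman reproducing kernel k_w(z) = 1/(1 - conj(w) z)^2 equals |w|^{-2} · log(1/(1 - |w|^2)); that is, ∫_D |1/(1 - conj(w) z)^2| dA(z) = |w|^{-2} log(1/(1-|w|^2)), where dA is normalized area measure on D. -/

import Mathlib

open Complex Metric MeasureTheory
open Set


/-- Mean value: circle average of an analytic function on the closed unit disk. -/
lemma circle_mean (g : ℂ → ℂ) (hg : DifferentiableOn ℂ g (closedBall 0 1)) :
    ∫ θ in (0:ℝ)..(2*Real.pi), g (Complex.exp (θ * Complex.I)) = 2 * Real.pi * g 0 := by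
  have hdc : DiffContOnCl ℂ g (ball 0 1) := by
    rw [← closure_ball (0:ℂ) one_ne_zero] at hg
    exact hg.diffContOnCl
  have h := hdc.circleIntegral_sub_inv_smul (mem_ball_self one_pos)
  rw [circleIntegral] at h
  simp only [deriv_circleMap, circleMap_zero, sub_zero, one_mul, smul_eq_mul, Complex.ofReal_one] at h
  have hne : ∀ θ : ℝ, Complex.exp (θ * Complex.I) ≠ 0 := fun θ => Complex.exp_ne_zero _
  have h2 : ∀ θ : ℝ, Complex.exp (θ * Complex.I) * Complex.I *
      ((Complex.exp (θ * Complex.I))⁻¹ * g (Complex.exp (θ * Complex.I)))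
      = Complex.I * g (Complex.exp (θ * Complex.I)) := by
    intro θ
    field_simp
  rw [intervalIntegral.integral_congr (fun θ _ => h2 θ)] at h
  rw [intervalIntegral.integral_const_mul] at h
  apply mul_left_cancel₀ Complex.I_ne_zero
  rw [h]; ring

lemma poisson (b : ℂ) (hb : ‖b‖ < 1) :
    ∫ θ in Ioo (-Real.pi) Real.pi, (‖1 - b * Complex.exp (θ * Complex.I)‖^2)⁻¹
      = 2 * Real.pi / (1 - ‖b‖^2) := by
  set g : ℂ → ℂ := fun z => (1 + b * z) / (1 - b * z) with hgdef
  have hne : ∀ z : ℂ, ‖z‖ ≤ 1 → 1 - b * z ≠ 0 := by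
    intro z hz
    have : ‖b * z‖ < 1 := by
      calc ‖b * z‖ = ‖b‖ * ‖z‖ := norm_mul _ _
        _ ≤ ‖b‖ * 1 := by nlinarith [norm_nonneg b]
        _ < 1 := by nlinarith
    intro h
    rw [sub_eq_zero] at h
    rw [← h] at this
    simp at this
  have hg : DifferentiableOn ℂ g (closedBall 0 1) := by
    apply DifferentiableOn.div
    · exact (differentiable_const _ |>.add ((differentiable_id.const_mul b))).differentiableOn
    · exact (differentiable_const _ |>.sub ((differentiable_id.const_mul b))).differentiableOn
    · intro z hz
      exact hne z (by simpa using mem_closedBall_zero_iff.mp hz)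
  have hmean := circle_mean g hg
  have hg0 : g 0 = 1 := by simp [hgdef]
  rw [hg0, mul_one] at hmean
  -- periodicity
  have hper : Function.Periodic (fun θ : ℝ => g (Complex.exp (θ * Complex.I))) (2 * Real.pi) := by
    intro θ
    simp only
    congr 1
    rw [Complex.ofReal_add, add_mul, Complex.exp_add]
    norm_num [Complex.exp_two_pi_mul_I]
  have hshift := hper.intervalIntegral_add_eq (-Real.pi) 0
  rw [zero_add, (by ring : -Real.pi + 2 * Real.pi = Real.pi)] at hshift
  have hint : ∫ θ in (-Real.pi)..Real.pi, g (Complex.exp (θ * Complex.I))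
      = (2 * Real.pi : ℝ) := by
    rw [hshift, hmean]; norm_num
  -- continuity and integrability
  have hcont : Continuous fun θ : ℝ => g (Complex.exp (θ * Complex.I)) := by
    have hexp : Continuous fun θ : ℝ => Complex.exp (θ * Complex.I) :=
      (Complex.continuous_ofReal.mul continuous_const).cexp
    apply Continuous.div
    · exact continuous_const.add (continuous_const.mul hexp)
    · exact continuous_const.sub (continuous_const.mul hexp)
    · intro θ
      exact hne _ (by simp [Complex.norm_exp_ofReal_mul_I])
  -- real parts
  have hre : ∀ θ : ℝ, (g (Complex.exp (θ * Complex.I))).re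
      = (1 - ‖b‖^2) * (‖1 - b * Complex.exp (θ * Complex.I)‖^2)⁻¹ := by
    intro θ
    set u := b * Complex.exp (θ * Complex.I) with hu
    have hnu : Complex.normSq u = ‖b‖^2 := by
      rw [hu, Complex.normSq_mul, Complex.normSq_eq_norm_sq, Complex.normSq_eq_norm_sq,
        Complex.norm_exp_ofReal_mul_I]
      ring
    have hnd : ‖1 - u‖^2 = Complex.normSq (1 - u) := by
      exact (Complex.normSq_eq_norm_sq _).symm
    have hd0 : Complex.normSq (1 - u) ≠ 0 := by
      have h1 := hne (Complex.exp (θ * Complex.I)) (by simp [Complex.norm_exp_ofReal_mul_I])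
      rw [hu]
      exact (Complex.normSq_pos.mpr h1).ne'
    have hkey : (g (Complex.exp (θ * Complex.I))).re
        = (1 - Complex.normSq u) / Complex.normSq (1 - u) := by
      rw [hgdef]
      simp only [← hu, Complex.div_re, Complex.normSq_apply, Complex.add_re, Complex.sub_re,
        Complex.add_im, Complex.sub_im, Complex.one_re, Complex.one_im]
      ring
    rw [hkey, hnu, ← hnd, div_eq_mul_inv]
  -- put it together
  have hIoo : ∫ θ in Ioo (-Real.pi) Real.pi, (‖1 - b * Complex.exp (θ * Complex.I)‖^2)⁻¹
      = ∫ θ in (-Real.pi)..Real.pi, (‖1 - b * Complex.exp (θ * Complex.I)‖^2)⁻¹ := by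
    rw [intervalIntegral.integral_of_le (by linarith [Real.pi_pos]),
      ← MeasureTheory.integral_Ioc_eq_integral_Ioo]
  rw [hIoo]
  have hb2 : (0:ℝ) < 1 - ‖b‖^2 := by nlinarith [norm_nonneg b]
  have : ∫ θ in (-Real.pi)..Real.pi, (‖1 - b * Complex.exp (θ * Complex.I)‖^2)⁻¹
      = (1 - ‖b‖^2)⁻¹ * ∫ θ in (-Real.pi)..Real.pi, (g (Complex.exp (θ * Complex.I))).re := by
    rw [← intervalIntegral.integral_const_mul]
    apply intervalIntegral.integral_congr
    intro θ _
    simp only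
    rw [hre θ, ← mul_assoc, inv_mul_cancel₀ (ne_of_gt hb2), one_mul]
  rw [this]
  have hreint : ∫ θ in (-Real.pi)..Real.pi, (g (Complex.exp (θ * Complex.I))).re
      = (∫ θ in (-Real.pi)..Real.pi, g (Complex.exp (θ * Complex.I))).re := by
    have hint' : IntervalIntegrable (fun θ : ℝ => g (Complex.exp (θ * Complex.I)))
        MeasureTheory.volume (-Real.pi) Real.pi := hcont.intervalIntegrable _ _
    simpa using (Complex.reCLM.intervalIntegral_comp_comm hint')
  rw [hreint, hint]
  simp
  field_simp

lemma radial_int (a : ℝ) (ha0 : 0 < a) (ha1 : a < 1) :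
    ∫ r in (0:ℝ)..1, r / (1 - a^2 * r^2)
      = (2 * a^2)⁻¹ * Real.log (1 / (1 - a^2)) := by
  have hpos : ∀ r ∈ Icc (0:ℝ) 1, 0 < 1 - a^2 * r^2 := by
    intro r hr
    obtain ⟨h0, h1⟩ := hr
    have ha2 : a^2 < 1 := by nlinarith
    have hr2 : r^2 ≤ 1 := by nlinarith
    nlinarith [sq_nonneg a]
  have hderiv : ∀ r ∈ uIcc (0:ℝ) 1,
      HasDerivAt (fun r : ℝ => -(2 * a^2)⁻¹ * Real.log (1 - a^2 * r^2))
        (r / (1 - a^2 * r^2)) r := by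
    intro r hr
    rw [uIcc_of_le zero_le_one] at hr
    have h1 : HasDerivAt (fun r : ℝ => 1 - a^2 * r^2) (-(a^2 * (2 * r))) r := by
      have := ((hasDerivAt_pow 2 r).const_mul (a^2)).const_sub 1
      simpa [pow_one] using this
    have h2 := (h1.log (hpos r hr).ne')
    have h3 := h2.const_mul (-(2 * a^2)⁻¹)
    convert h3 using 1
    · rfl
    · rfl
    have hne := (hpos r hr).ne'
    have ha2 : a ≠ 0 := ha0.ne'
    field_simp
  have hcont : ContinuousOn (fun r : ℝ => r / (1 - a^2 * r^2)) (Icc (0:ℝ) 1) := by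
    apply ContinuousOn.div continuousOn_id
    · fun_prop
    · intro r hr; exact (hpos r hr).ne'
  have hii : IntervalIntegrable (fun r : ℝ => r / (1 - a^2 * r^2)) volume 0 1 :=
    hcont.intervalIntegrable_of_Icc zero_le_one
  rw [intervalIntegral.integral_eq_sub_of_hasDerivAt hderiv hii]
  have h10 : (0:ℝ) < 1 - a^2 := by nlinarith
  rw [Real.log_div one_ne_zero h10.ne', Real.log_one]
  norm_num

lemma polar_symm_eq (p : ℝ × ℝ) :
    Complex.polarCoord.symm p = (p.1 : ℂ) * Complex.exp (p.2 * Complex.I) := by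
  rw [Complex.polarCoord_symm_apply, Complex.exp_mul_I]
  simp [Complex.ofReal_cos, Complex.ofReal_sin]

/-- For `w` in the open unit disk, `w ≠ 0`, the `A¹`-norm of the Bergman kernel
`k_w(z) = (1 - conj w * z)⁻²` with respect to normalized area measure equals
`|w|⁻² * log (1/(1-|w|²))`. -/
theorem bergman_kernel_A1_norm (w : ℂ) (hw : w ∈ ball (0 : ℂ) 1) (hw0 : w ≠ 0) :
    (Real.pi)⁻¹ * ∫ z in ball (0 : ℂ) 1, ‖(1 / (1 - (starRingEnd ℂ) w * z) ^ 2)‖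
      = ‖w‖⁻¹ ^ 2 * Real.log (1 / (1 - ‖w‖ ^ 2)) := by
  have ha0 : 0 < ‖w‖ := norm_pos_iff.mpr hw0
  have ha1 : ‖w‖ < 1 := by simpa [dist_eq_norm] using hw
  set c := (starRingEnd ℂ) w with hc
  have hcn : ‖c‖ = ‖w‖ := by simp [hc]
  set h : ℂ → ℝ := fun z => ‖(1 / (1 - c * z) ^ 2)‖ with hh
  set G : ℝ × ℝ → ℝ :=
    fun p => p.1 * h ((p.1 : ℂ) * Complex.exp (p.2 * Complex.I)) with hG
  set box : Set (ℝ × ℝ) := Ioo (0:ℝ) 1 ×ˢ Ioo (-Real.pi) Real.pi with hbox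
  have hboxm : MeasurableSet box := (measurableSet_Ioo.prod measurableSet_Ioo)
  -- pointwise bound
  have hbound : ∀ z : ℂ, ‖z‖ ≤ 1 → h z ≤ ((1 - ‖w‖)^2)⁻¹ := by
    intro z hz
    have hd : 1 - ‖w‖ ≤ ‖1 - c * z‖ := by
      calc 1 - ‖w‖ ≤ 1 - ‖c * z‖ := by
            rw [norm_mul, hcn]
            nlinarith [norm_nonneg w]
        _ ≤ ‖1 - c * z‖ := by
            have := norm_sub_norm_le (1:ℂ) (c*z)
            simpa using this
    have h1 : (0:ℝ) < 1 - ‖w‖ := by linarith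
    rw [hh]
    simp only [norm_div, norm_one, norm_pow]
    rw [one_div]
    apply inv_anti₀ (by positivity)
    nlinarith
  have hmeas : Measurable h := by
    apply Measurable.norm
    apply Measurable.div measurable_const
    exact ((measurable_const.sub (measurable_id.const_mul c)).pow_const 2)
  have hGmeas : Measurable G := by
    apply Measurable.mul measurable_fst
    apply hmeas.comp
    apply Measurable.mul
    · exact Complex.measurable_ofReal.comp measurable_fst
    · exact (Complex.measurable_ofReal.comp measurable_snd).mul measurable_const |>.cexp
  -- polar change of variables
  have key : ∫ z in ball (0:ℂ) 1, h z = ∫ p in box, G p := by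
    rw [← MeasureTheory.integral_indicator measurableSet_ball]
    rw [← Complex.integral_comp_polarCoord_symm]
    have hcongr : ∀ p ∈ polarCoord.target,
        p.1 • Set.indicator (ball (0:ℂ) 1) h (Complex.polarCoord.symm p)
          = Set.indicator box G p := by
      intro p hp
      rw [polarCoord_target] at hp
      obtain ⟨hp1, hp2⟩ := hp
      have habs : ‖Complex.polarCoord.symm p‖ = p.1 := by
        rw [polar_symm_eq, norm_mul, Complex.norm_real, Real.norm_eq_abs,
          abs_of_pos hp1]
        simp [Complex.norm_exp_ofReal_mul_I]
      by_cases hlt : p.1 < 1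
      · have hmem : Complex.polarCoord.symm p ∈ ball (0:ℂ) 1 := by
          rw [mem_ball_zero_iff, habs]; exact hlt
        rw [Set.indicator_of_mem hmem, Set.indicator_of_mem (by exact ⟨⟨hp1, hlt⟩, hp2⟩)]
        rw [hG, smul_eq_mul, polar_symm_eq]
      · have hmem : Complex.polarCoord.symm p ∉ ball (0:ℂ) 1 := by
          rw [mem_ball_zero_iff, habs]; exact hlt
        rw [Set.indicator_of_notMem hmem, Set.indicator_of_notMem
          (by intro hmem'; exact hlt hmem'.1.2)]
        simp
    rw [MeasureTheory.setIntegral_congr_fun polarCoord.open_target.measurableSet hcongr]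
    rw [MeasureTheory.setIntegral_indicator hboxm]
    have hsub : polarCoord.target ∩ box = box := by
      rw [polarCoord_target, hbox]
      exact Set.inter_eq_self_of_subset_right (Set.prod_mono Set.Ioo_subset_Ioi_self subset_rfl)
    rw [hsub]
  -- integrability on the box
  have hGint : IntegrableOn G box := by
    refine Measure.integrableOn_of_bounded (M := ((1 - ‖w‖)^2)⁻¹) ?_ hGmeas.aestronglyMeasurable ?_
    · rw [hbox]
      rw [Measure.volume_eq_prod, Measure.prod_prod]
      exact (ENNReal.mul_ne_top (by simp [Real.volume_Ioo]) (by simp [Real.volume_Ioo]))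
    · apply (MeasureTheory.ae_restrict_iff' hboxm).mpr
      apply MeasureTheory.ae_of_all
      intro p hp
      obtain ⟨⟨hp0, hp1⟩, _⟩ := hp
      have hz : ‖(p.1 : ℂ) * Complex.exp (p.2 * Complex.I)‖ ≤ 1 := by
        rw [norm_mul, Complex.norm_real, Real.norm_eq_abs, abs_of_pos hp0]
        simp only [Complex.norm_exp_ofReal_mul_I, mul_one]
        exact le_of_lt hp1
      have hb := hbound _ hz
      have hge : 0 ≤ h ((p.1:ℂ) * Complex.exp (p.2 * Complex.I)) := by
        simp only [hh]; exact norm_nonneg _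
      rw [hG, Real.norm_eq_abs]
      simp only
      rw [_root_.abs_of_nonneg (mul_nonneg hp0.le hge)]
      calc p.1 * h ((p.1:ℂ) * Complex.exp (p.2 * Complex.I))
          ≤ 1 * ((1 - ‖w‖)^2)⁻¹ := by
            apply mul_le_mul (le_of_lt hp1) hb (norm_nonneg _) zero_le_one
        _ = ((1 - ‖w‖)^2)⁻¹ := one_mul _
  -- Fubini and inner integral
  have fub : ∫ p in box, G p
      = ∫ r in Ioo (0:ℝ) 1, ∫ θ in Ioo (-Real.pi) Real.pi, G (r, θ) := by
    rw [hbox, Measure.volume_eq_prod] at hGint ⊢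
    exact MeasureTheory.setIntegral_prod G hGint
  have inner : ∀ r ∈ Ioo (0:ℝ) 1,
      ∫ θ in Ioo (-Real.pi) Real.pi, G (r, θ)
        = 2 * Real.pi * (r / (1 - ‖w‖^2 * r^2)) := by
    intro r hr
    obtain ⟨hr0, hr1⟩ := hr
    have hb : ‖c * (r:ℂ)‖ < 1 := by
      rw [norm_mul, hcn, Complex.norm_real, Real.norm_eq_abs, abs_of_pos hr0]
      nlinarith
    have heq : ∀ θ : ℝ, G (r, θ) = r * (‖1 - c * (r:ℂ) * Complex.exp (θ * Complex.I)‖^2)⁻¹ := by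
      intro θ
      rw [hG]
      simp only
      congr 1
      rw [hh]
      simp only [one_div, norm_inv, norm_pow, mul_assoc]
    rw [MeasureTheory.setIntegral_congr_fun measurableSet_Ioo (fun θ _ => heq θ)]
    rw [MeasureTheory.integral_const_mul]
    rw [poisson (c * (r:ℂ)) hb]
    have : ‖c * (r:ℂ)‖^2 = ‖w‖^2 * r^2 := by
      rw [norm_mul, hcn, Complex.norm_real, Real.norm_eq_abs, abs_of_pos hr0]
      ring
    rw [this]
    ring
  -- outer integral
  have outer : ∫ r in Ioo (0:ℝ) 1, ∫ θ in Ioo (-Real.pi) Real.pi, G (r, θ)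
      = 2 * Real.pi * ((2 * ‖w‖^2)⁻¹ * Real.log (1 / (1 - ‖w‖^2))) := by
    rw [MeasureTheory.setIntegral_congr_fun measurableSet_Ioo inner]
    rw [← MeasureTheory.integral_Ioc_eq_integral_Ioo,
      ← intervalIntegral.integral_of_le zero_le_one]
    rw [intervalIntegral.integral_const_mul]
    rw [radial_int ‖w‖ ha0 ha1]
  rw [key, fub, outer]
  have hπ : Real.pi ≠ 0 := Real.pi_ne_zero
  have h2 : Real.pi⁻¹ * (2 * Real.pi * ((2 * ‖w‖ ^ 2)⁻¹ * Real.log (1 / (1 - ‖w‖ ^ 2))))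
      = (Real.pi⁻¹ * Real.pi) * ((2 * (2:ℝ)⁻¹) * ((‖w‖ ^ 2)⁻¹ * Real.log (1 / (1 - ‖w‖ ^ 2)))) := by
    rw [mul_inv]
    ring
  rw [h2, inv_mul_cancel₀ hπ, one_mul, inv_pow]
  norm_num
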